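/- Let E be a real inner product space, let 0 < m ≤ L, and let f : E → ℝ be differentiable with stationary point x⋆ (∇f(x⋆) = 0) such that for all x ∈ E, (L + m)·⟨x − x⋆, ∇f(x)⟩ ≥ m·L·‖x − x⋆‖² + ‖∇f(x)‖² (i.e. f ∈ S(m,L)). Let α satisfy 0 < α < 2/L and set r = max(|1 − α·m|, |1 − α·L|). Then r < 1, and if the sequence (x^k) satisfies x^{k+1} = x^k − α·∇f(x^k) for all k ≥ 0, then ‖x^k − x⋆‖ ≤ r^k·‖x^0 − x⋆‖ for all k, and x^k → x⋆ as k → ∞. -/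
import Mathlib


open RealInnerProductSpace Filter

/-- Scalar contraction lemma for one gradient-descent step. -/
lemma gd_step_scalar (m L α r ne ng ip np : ℝ)
    (hm : 0 < m) (hmL : m ≤ L) (hα : 0 < α) (hαL : α * L < 2)
    (hrm : |1 - α * m| ≤ r) (hrL : |1 - α * L| ≤ r)
    (hne : 0 ≤ ne) (hng : 0 ≤ ng) (hnp : 0 ≤ np)
    (hsec : (L + m) * ip ≥ m * L * ne ^ 2 + ng ^ 2)
    (hcs : ip ≤ ne * ng)
    (hsq : np ^ 2 = ne ^ 2 - 2 * α * ip + α ^ 2 * ng ^ 2) :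
    np ≤ r * ne := by
  have hLm : 0 < L + m := by linarith
  have hfac : (ng - m * ne) * (ng - L * ne) ≤ 0 := by nlinarith
  have hr0 : 0 ≤ r := le_trans (abs_nonneg _) hrm
  have hrm2 : (1 - α * m) ^ 2 ≤ r ^ 2 := by
    rw [← sq_abs]; exact pow_le_pow_left₀ (abs_nonneg _) hrm 2
  have hrL2 : (1 - α * L) ^ 2 ≤ r ^ 2 := by
    rw [← sq_abs]; exact pow_le_pow_left₀ (abs_nonneg _) hrL 2
  have h2 : 2 * α * (m * L * ne ^ 2 + ng ^ 2) ≤ 2 * α * ((L + m) * ip) :=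
    mul_le_mul_of_nonneg_left hsec (by positivity)
  have key : np ^ 2 ≤ r ^ 2 * ne ^ 2 := by
    rcases le_or_gt (α * (L + m)) 2 with hc | hc
    · have hg : m * ne ≤ ng := by
        by_contra h
        push_neg at h
        have h1 : ng - m * ne < 0 := by linarith
        have h2' : ng - L * ne < 0 := by nlinarith
        nlinarith [mul_pos_of_neg_of_neg h1 h2']
      have h3 : 0 ≤ α * (2 - α * (L + m)) * (ng ^ 2 - (m * ne) ^ 2) := by
        apply mul_nonneg (mul_nonneg hα.le (by linarith))
        have := pow_le_pow_left₀ (mul_nonneg hm.le hne) hg 2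
        linarith
      have hid : (L + m) * ((1 - α * m) ^ 2 * ne ^ 2) - (L + m) * np ^ 2 =
          2 * α * ((L + m) * ip - (m * L * ne ^ 2 + ng ^ 2)) +
            α * (2 - α * (L + m)) * (ng ^ 2 - (m * ne) ^ 2) := by rw [hsq]; ring
      have h1' : (L + m) * np ^ 2 ≤ (L + m) * ((1 - α * m) ^ 2 * ne ^ 2) := by linarith
      have h1 : np ^ 2 ≤ (1 - α * m) ^ 2 * ne ^ 2 := le_of_mul_le_mul_left h1' hLm
      calc np ^ 2 ≤ (1 - α * m) ^ 2 * ne ^ 2 := h1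
        _ ≤ r ^ 2 * ne ^ 2 := mul_le_mul_of_nonneg_right hrm2 (sq_nonneg ne)
    · have hg : ng ≤ L * ne := by
        by_contra h
        push_neg at h
        have h1 : 0 < ng - L * ne := by linarith
        have h2' : 0 < ng - m * ne := by nlinarith
        nlinarith [mul_pos h2' h1]
      have h3 : 0 ≤ α * (α * (L + m) - 2) * ((L * ne) ^ 2 - ng ^ 2) := by
        apply mul_nonneg (mul_nonneg hα.le (by linarith))
        have := pow_le_pow_left₀ hng hg 2
        linarith
      have hid : (L + m) * ((1 - α * L) ^ 2 * ne ^ 2) - (L + m) * np ^ 2 =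
          2 * α * ((L + m) * ip - (m * L * ne ^ 2 + ng ^ 2)) +
            α * (α * (L + m) - 2) * ((L * ne) ^ 2 - ng ^ 2) := by rw [hsq]; ring
      have h1' : (L + m) * np ^ 2 ≤ (L + m) * ((1 - α * L) ^ 2 * ne ^ 2) := by linarith
      have h1 : np ^ 2 ≤ (1 - α * L) ^ 2 * ne ^ 2 := le_of_mul_le_mul_left h1' hLm
      calc np ^ 2 ≤ (1 - α * L) ^ 2 * ne ^ 2 := h1
        _ ≤ r ^ 2 * ne ^ 2 := mul_le_mul_of_nonneg_right hrL2 (sq_nonneg ne)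
  have key' : np ^ 2 ≤ (r * ne) ^ 2 := by rw [mul_pow]; exact key
  exact (pow_le_pow_iff_left₀ hnp (mul_nonneg hr0 hne) two_ne_zero).mp key'

/-- For `f ∈ S(m,L)` with stationary point `x⋆` and any stepsize `0 < α < 2/L`,
the contraction factor `r = max |1 − αm| |1 − αL|` satisfies `r < 1`, gradient descent
satisfies `‖x^k − x⋆‖ ≤ r^k ‖x^0 − x⋆‖`, and `x^k → x⋆`. -/
theorem gradient_descent_linear_convergence
    {E : Type*} [NormedAddCommGroup E] [InnerProductSpace ℝ E] [CompleteSpace E]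
    (m L : ℝ) (hm : 0 < m) (hmL : m ≤ L)
    (f : E → ℝ) (f' : E → E) (hf : ∀ x, HasGradientAt f (f' x) x)
    (xstar : E) (hstar : f' xstar = 0)
    (hsector : ∀ x : E,
      (L + m) * ⟪x - xstar, f' x⟫ ≥ m * L * ‖x - xstar‖ ^ 2 + ‖f' x‖ ^ 2)
    (α : ℝ) (hα : 0 < α) (hα2 : α < 2 / L)
    (r : ℝ) (hr : r = max |1 - α * m| |1 - α * L|)
    (x : ℕ → E) (hiter : ∀ k : ℕ, x (k + 1) = x k - α • f' (x k)) :
    r < 1 ∧ (∀ k : ℕ, ‖x k - xstar‖ ≤ r ^ k * ‖x 0 - xstar‖) ∧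
      Tendsto x atTop (nhds xstar) := by
  have hL : 0 < L := lt_of_lt_of_le hm hmL
  have hαL : α * L < 2 := by
    have := (lt_div_iff₀ hL).mp hα2; linarith
  have hαm : α * m < 2 := by nlinarith
  have hr1 : r < 1 := by
    rw [hr]
    apply max_lt <;> rw [abs_lt] <;> constructor <;> nlinarith
  have hr0 : 0 ≤ r := hr ▸ le_trans (abs_nonneg _) (le_max_left _ _)
  have hstep : ∀ k, ‖x (k + 1) - xstar‖ ≤ r * ‖x k - xstar‖ := by
    intro k
    set e := x k - xstar with he
    set g := f' (x k) with hg
    have hsq : ‖x (k + 1) - xstar‖ ^ 2 = ‖e‖ ^ 2 - 2 * α * ⟪e, g⟫ + α ^ 2 * ‖g‖ ^ 2 := by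
      rw [hiter k]
      have h1 : x k - α • g - xstar = e - α • g := by rw [he]; abel
      rw [h1, norm_sub_sq_real, real_inner_smul_right, norm_smul]
      rw [Real.norm_eq_abs, abs_of_pos hα]
      ring
    exact gd_step_scalar m L α r ‖e‖ ‖g‖ ⟪e, g⟫ ‖x (k + 1) - xstar‖ hm hmL hα hαL
      (hr ▸ le_max_left _ _) (hr ▸ le_max_right _ _)
      (norm_nonneg _) (norm_nonneg _) (norm_nonneg _)
      (hsector (x k)) (real_inner_le_norm e g) hsq
  have hbound : ∀ k : ℕ, ‖x k - xstar‖ ≤ r ^ k * ‖x 0 - xstar‖ := by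
    intro k
    induction k with
    | zero => simp
    | succ n ih =>
      calc ‖x (n + 1) - xstar‖ ≤ r * ‖x n - xstar‖ := hstep n
        _ ≤ r * (r ^ n * ‖x 0 - xstar‖) := mul_le_mul_of_nonneg_left ih hr0
        _ = r ^ (n + 1) * ‖x 0 - xstar‖ := by ring
  refine ⟨hr1, hbound, ?_⟩
  rw [tendsto_iff_norm_sub_tendsto_zero]
  have hpow : Tendsto (fun k : ℕ => r ^ k * ‖x 0 - xstar‖) atTop (nhds 0) := by
    have h := tendsto_pow_atTop_nhds_zero_of_lt_one hr0 hr1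
    simpa using h.mul_const ‖x 0 - xstar‖
  exact squeeze_zero (fun k => norm_nonneg _) hbound hpow
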